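/- arXiv:2105.01012 — 2 statements merged into one kernel-verified Lean document; each statement's English description precedes it below -/
import Mathlib

section
/- Let X be a compact metrizable space equipped with its Borel σ-algebra, let R be a closed relation on X, and let μ be a Borel probability measure on X such that μ(K) ≤ μ(R†(K)) for every compact set K ⊆ X (note that R†(K) is compact, hence Borel). Then for every Borel set B ⊆ X with μ(B) > 0 there exists a Borel set E' ⊆ B with μ(E') = μ(B) such that every x ∈ E' is infinitely recurrent in B, i.e., for every n ∈ ℕ there exists j ≥ n with R^j(x) ∩ B ≠ ∅. (In other words, μ-almost every point of B returns to B under the iterated relation infinitely often.) -/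
open MeasureTheory Set
open scoped ENNReal NNReal

/-- Forward image of a set under a relation. -/
def relImg {X : Type*} (R : Set (X × X)) (A : Set X) : Set X :=
  {y | ∃ x ∈ A, (x, y) ∈ R}

/-- Backward image (adjoint image) of a set under a relation. -/
def relDag {X : Type*} (R : Set (X × X)) (A : Set X) : Set X :=
  {x | ∃ y ∈ A, (x, y) ∈ R}

/-- Iterates of a relation: `R⁰` is the identity relation and
`R^{n+1} = {(x,z) : ∃ y, (x,y) ∈ R ∧ (y,z) ∈ R^n}`. -/
def relIter {X : Type*} (R : Set (X × X)) : ℕ → Set (X × X)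
  | 0 => {p | p.1 = p.2}
  | n + 1 => {p | ∃ y, (p.1, y) ∈ R ∧ (y, p.2) ∈ relIter R n}

section aux
variable {X : Type*}

lemma relDag_mono (R : Set (X × X)) {A B : Set X} (h : A ⊆ B) : relDag R A ⊆ relDag R B := by
  rintro x ⟨y, hy, hxy⟩; exact ⟨y, h hy, hxy⟩

lemma relDag_union (R : Set (X × X)) (A B : Set X) :
    relDag R (A ∪ B) = relDag R A ∪ relDag R B := by
  ext x; constructor
  · rintro ⟨y, hy | hy, hxy⟩
    · exact Or.inl ⟨y, hy, hxy⟩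
    · exact Or.inr ⟨y, hy, hxy⟩
  · rintro (⟨y, hy, hxy⟩ | ⟨y, hy, hxy⟩)
    · exact ⟨y, Or.inl hy, hxy⟩
    · exact ⟨y, Or.inr hy, hxy⟩

lemma relDag_iUnion {ι : Sort*} (R : Set (X × X)) (A : ι → Set X) :
    relDag R (⋃ i, A i) = ⋃ i, relDag R (A i) := by
  ext x; constructor
  · rintro ⟨y, hy, hxy⟩
    rcases mem_iUnion.1 hy with ⟨i, hi⟩
    exact mem_iUnion.2 ⟨i, y, hi, hxy⟩
  · intro hx
    rcases mem_iUnion.1 hx with ⟨i, y, hi, hxy⟩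
    exact ⟨y, mem_iUnion.2 ⟨i, hi⟩, hxy⟩

lemma relDag_iter_zero (R : Set (X × X)) (A : Set X) : relDag (relIter R 0) A = A := by
  ext x; constructor
  · rintro ⟨y, hy, hxy⟩
    simp only [relIter, mem_setOf_eq] at hxy
    exact hxy ▸ hy
  · intro hx; exact ⟨x, hx, rfl⟩

lemma relDag_iter_succ (R : Set (X × X)) (s : ℕ) (A : Set X) :
    relDag (relIter R (s + 1)) A = relDag R (relDag (relIter R s) A) := by
  ext x; constructor
  · rintro ⟨z, hz, y, hxy, hyz⟩
    exact ⟨y, ⟨z, hz, hyz⟩, hxy⟩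
  · rintro ⟨y, ⟨z, hz, hyz⟩, hxy⟩
    exact ⟨z, hz, y, hxy, hyz⟩

lemma relDag_iter_add (R : Set (X × X)) (a b : ℕ) (A : Set X) :
    relDag (relIter R (a + b)) A = relDag (relIter R a) (relDag (relIter R b) A) := by
  induction a with
  | zero => simp [relDag_iter_zero]
  | succ n ih =>
      have h : n + 1 + b = (n + b) + 1 := by omega
      rw [h, relDag_iter_succ, relDag_iter_succ, ih]

variable [TopologicalSpace X] [CompactSpace X] [T2Space X]

lemma isCompact_relDag {R : Set (X × X)} (hR : IsClosed R) {K : Set X} (hK : IsCompact K) :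
    IsCompact (relDag R K) := by
  have h : relDag R K = Prod.fst '' (R ∩ Prod.snd ⁻¹' K) := by
    ext x; constructor
    · rintro ⟨y, hy, hxy⟩; exact ⟨(x, y), ⟨hxy, hy⟩, rfl⟩
    · rintro ⟨⟨a, b⟩, ⟨hab, hb⟩, rfl⟩; exact ⟨b, hb, hab⟩
  rw [h]
  have hclosed : IsClosed (R ∩ Prod.snd ⁻¹' K) :=
    hR.inter (hK.isClosed.preimage continuous_snd)
  exact hclosed.isCompact.image continuous_fst

lemma isCompact_relDag_iter {R : Set (X × X)} (hR : IsClosed R) (j : ℕ) {K : Set X}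
    (hK : IsCompact K) : IsCompact (relDag (relIter R j) K) := by
  induction j with
  | zero => rwa [relDag_iter_zero]
  | succ n ih => rw [relDag_iter_succ]; exact isCompact_relDag hR ih

end aux

/-- **Poincaré recurrence for closed relations** (relation-theoretic content of
Theorem 1.1 of the paper). -/
theorem poincare_recurrence_closed_relation
    {X : Type*} [TopologicalSpace X] [CompactSpace X] [TopologicalSpace.MetrizableSpace X]
    [MeasurableSpace X] [BorelSpace X]
    (R : Set (X × X)) (hR : IsClosed R)
    (μ : Measure X) [IsProbabilityMeasure μ]
    (hinv : ∀ K : Set X, IsCompact K → μ K ≤ μ (relDag R K))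
    (B : Set X) (hB : MeasurableSet B) (hBpos : 0 < μ B) :
    ∃ E' : Set X, MeasurableSet E' ∧ E' ⊆ B ∧ μ E' = μ B ∧
      ∀ x ∈ E', ∀ n : ℕ, ∃ j ≥ n, (relImg (relIter R j) {x} ∩ B).Nonempty := by
  letI := TopologicalSpace.metrizableSpaceMetric X
  -- invariance for iterates
  have hinv_iter : ∀ (j : ℕ) (K : Set X), IsCompact K → μ K ≤ μ (relDag (relIter R j) K) := by
    intro j
    induction j with
    | zero => intro K hK; rw [relDag_iter_zero]
    | succ n ih =>
        intro K hK
        rw [relDag_iter_succ]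
        exact (ih K hK).trans (hinv _ (isCompact_relDag_iter hR n hK))
  -- core lemma: a.e. point of a compact C enters ⋃_{j ≥ m+1} (R^j)†(C)
  have core : ∀ (C : Set X), IsCompact C → ∀ m : ℕ,
      μ (C \ ⋃ j : ℕ, relDag (relIter R (m + 1 + j)) C) = 0 := by
    intro C hC m
    set U : Set X := ⋃ j : ℕ, relDag (relIter R (m + 1 + j)) C with hU
    have hUmeas : MeasurableSet U :=
      MeasurableSet.iUnion fun j => (isCompact_relDag_iter hR _ hC).isClosed.measurableSet
    have hAmeas : MeasurableSet (C \ U) := hC.isClosed.measurableSet.diff hUmeas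
    -- every compact subset of C \ U has measure zero
    have key : ∀ K, K ⊆ C \ U → IsCompact K → μ K = 0 := by
      intro K hKsub hK
      set n := m + 1 with hn
      set D : ℕ → Set X := fun i => relDag (relIter R ((i + 1) * n)) K with hD
      have hDcompact : ∀ i, IsCompact (D i) := fun i => isCompact_relDag_iter hR _ hK
      have hDdisj : ∀ i, Disjoint K (D i) := by
        intro i
        rw [Set.disjoint_left]
        intro x hxK hxD
        have hxU : x ∈ U := by
          rcases hxD with ⟨y, hyK, hxy⟩
          refine mem_iUnion.2 ⟨(i + 1) * n - (m + 1), ⟨y, (hKsub hyK).1, ?_⟩⟩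
          have harith : m + 1 + ((i + 1) * n - (m + 1)) = (i + 1) * n := by
            have hle : n ≤ (i + 1) * n := Nat.le_mul_of_pos_left n (Nat.succ_pos i)
            omega
          rwa [harith]
        exact (hKsub hxK).2 hxU
      set W : ℕ → Set X := fun t => ⋃ i ∈ Finset.range t, D i with hW
      have hWcompact : ∀ t, IsCompact (W t) := by
        intro t
        apply Set.Finite.isCompact_biUnion (Finset.finite_toSet _)
        intro i _; exact hDcompact i
      have hWmeas : ∀ t, MeasurableSet (W t) :=
        fun t => (hWcompact t).isClosed.measurableSet
      have hWdisj : ∀ t, Disjoint K (W t) := by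
        intro t
        rw [Set.disjoint_left]
        intro x hxK hxW
        rcases mem_iUnion₂.1 hxW with ⟨i, _, hxD⟩
        exact (Set.disjoint_left.1 (hDdisj i)) hxK hxD
      have hstep : ∀ t, relDag (relIter R n) (K ∪ W t) ⊆ W (t + 1) := by
        intro t
        rw [relDag_union]
        apply Set.union_subset
        · intro x hx
          have hx0 : x ∈ D 0 := by
            have h0 : (0 + 1) * n = n := by ring
            simpa [hD, h0] using hx
          exact mem_iUnion₂.2 ⟨0, Finset.mem_range.2 (Nat.succ_pos t), hx0⟩
        · intro x hx
          rw [hW] at hx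
          simp only [relDag_iUnion, mem_iUnion] at hx
          rcases hx with ⟨i, hx⟩
          obtain ⟨hi, hx⟩ := hx
          have hi' : i < t := Finset.mem_range.1 hi
          have hcomp : relDag (relIter R n) (D i) = D (i + 1) := by
            show relDag (relIter R n) (relDag (relIter R ((i + 1) * n)) K)
              = relDag (relIter R ((i + 1 + 1) * n)) K
            rw [← relDag_iter_add]
            have harith : n + (i + 1) * n = (i + 1 + 1) * n := by ring
            rw [harith]
          rw [hcomp] at hx
          exact mem_iUnion₂.2 ⟨i + 1, Finset.mem_range.2 (by omega), hx⟩
      have hlower : ∀ t : ℕ, (t : ℝ≥0∞) * μ K ≤ μ (W t) := by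
        intro t
        induction t with
        | zero => simp
        | succ s ih =>
            have h1 : μ (K ∪ W s) = μ K + μ (W s) :=
              measure_union (hWdisj s) (hWmeas s)
            have h2 : μ (K ∪ W s) ≤ μ (W (s + 1)) :=
              le_trans (hinv_iter n _ (hK.union (hWcompact s)))
                (measure_mono (hstep s))
            calc ((s + 1 : ℕ) : ℝ≥0∞) * μ K = μ K + (s : ℝ≥0∞) * μ K := by
                  push_cast; ring
              _ ≤ μ K + μ (W s) := by gcongr
              _ = μ (K ∪ W s) := h1.symm
              _ ≤ μ (W (s + 1)) := h2
      by_contra hne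
      obtain ⟨t, ht⟩ := ENNReal.exists_nat_gt
        (show 1 / μ K ≠ ∞ by simp [ENNReal.div_eq_top, hne])
      have h1 : (1 : ℝ≥0∞) < t * μ K := by
        rw [ENNReal.div_lt_iff (Or.inl hne) (Or.inl (measure_ne_top μ K))] at ht
        exact ht
      have h2 : (t : ℝ≥0∞) * μ K ≤ 1 := (hlower t).trans prob_le_one
      exact absurd (h1.trans_le h2) (not_lt.2 le_rfl)
    -- inner regularity gives the conclusion
    rw [hAmeas.measure_eq_iSup_isCompact]
    refine le_antisymm (iSup_le fun K => iSup_le fun hK1 => iSup_le fun hK2 => ?_) zero_le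
    exact (key K hK1 hK2).le
  -- the good set associated to a compact C ⊆ B
  set Good : Set X → Set X :=
    fun C => C ∩ ⋂ m : ℕ, ⋃ j : ℕ, relDag (relIter R (m + 1 + j)) C with hGood
  have hGoodMeas : ∀ C : Set X, IsCompact C → MeasurableSet (Good C) := by
    intro C hC
    exact hC.isClosed.measurableSet.inter
      (MeasurableSet.iInter fun m => MeasurableSet.iUnion fun j =>
        (isCompact_relDag_iter hR _ hC).isClosed.measurableSet)
  have hGoodFull : ∀ C : Set X, IsCompact C → μ (Good C) = μ C := by
    intro C hC
    have hdiff : μ (C \ Good C) = 0 := by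
      have hsub : C \ Good C ⊆ ⋃ m : ℕ, (C \ ⋃ j : ℕ, relDag (relIter R (m + 1 + j)) C) := by
        intro x hx
        rcases hx with ⟨hxC, hxG⟩
        have : ¬ x ∈ ⋂ m : ℕ, ⋃ j : ℕ, relDag (relIter R (m + 1 + j)) C := by
          intro h; exact hxG ⟨hxC, h⟩
        simp only [mem_iInter, not_forall] at this
        rcases this with ⟨m, hm⟩
        exact mem_iUnion.2 ⟨m, hxC, hm⟩
      refine measure_mono_null hsub ?_
      refine measure_iUnion_null fun m => core C hC m
    have hgsub : Good C ⊆ C := fun x hx => hx.1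
    have h1 : μ C = μ (Good C) + μ (C \ Good C) := by
      have h2 := measure_inter_add_diff (μ := μ) C (hGoodMeas C hC)
      rw [Set.inter_eq_right.2 hgsub] at h2
      exact h2.symm
    rw [h1, hdiff, add_zero]
  -- pick a sequence of compacts approximating B from inside
  have hC : ∀ k : ℕ, ∃ C : Set X, C ⊆ B ∧ IsCompact C ∧
      μ B < μ C + ((k : ℝ≥0∞) + 1)⁻¹ := by
    intro k
    have hε : (((k : ℝ≥0∞)) + 1)⁻¹ ≠ 0 :=
      ENNReal.inv_ne_zero.2 (by simp [ENNReal.add_eq_top])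
    exact hB.exists_isCompact_lt_add (measure_ne_top μ B) hε
  choose C hCB hCcomp hCμ using hC
  refine ⟨⋃ k : ℕ, Good (C k), MeasurableSet.iUnion fun k => hGoodMeas _ (hCcomp k),
    ?_, ?_, ?_⟩
  · exact iUnion_subset fun k => (Set.inter_subset_left).trans (hCB k)
  · refine le_antisymm (measure_mono (iUnion_subset fun k =>
      (Set.inter_subset_left).trans (hCB k))) ?_
    have hle : ∀ k : ℕ, μ B ≤ μ (⋃ k : ℕ, Good (C k)) + ((k : ℝ≥0∞) + 1)⁻¹ := by
      intro k
      have h1 : μ (C k) ≤ μ (⋃ k : ℕ, Good (C k)) := by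
        rw [← hGoodFull (C k) (hCcomp k)]
        exact measure_mono (subset_iUnion (fun k => Good (C k)) k)
      exact le_trans (hCμ k).le (by gcongr)
    have htend : Filter.Tendsto (fun k : ℕ => μ (⋃ k : ℕ, Good (C k)) + ((k : ℝ≥0∞) + 1)⁻¹)
        Filter.atTop (nhds (μ (⋃ k : ℕ, Good (C k)))) := by
      have h0 : Filter.Tendsto (fun k : ℕ => ((k : ℝ≥0∞) + 1)⁻¹) Filter.atTop (nhds 0) := by
        have h := ENNReal.tendsto_inv_nat_nhds_zero.comp (Filter.tendsto_add_atTop_nat 1)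
        exact h.congr fun k => by
          simp [Function.comp, Nat.cast_add, Nat.cast_one]
      simpa using Filter.Tendsto.add (tendsto_const_nhds) h0
    exact ge_of_tendsto' htend hle
  · intro x hx nn
    rcases mem_iUnion.1 hx with ⟨k, hxC, hxI⟩
    have hxn := mem_iInter.1 hxI nn
    rcases mem_iUnion.1 hxn with ⟨j, y, hyC, hxy⟩
    exact ⟨nn + 1 + j, by omega, ⟨y, ⟨⟨x, rfl, hxy⟩, hCB k hyC⟩⟩⟩
end

section
/- Let X be a compact metrizable space equipped with its Borel σ-algebra, let R be a closed relation on X, and let μ be a Borel probability measure on X such that μ(K) ≤ μ(R(K)) for every compact set K ⊆ X (note that R(K) is compact, hence Borel). Then for every Borel set B ⊆ X with μ(B) > 0 there exists a Borel set E' ⊆ B with μ(E') = μ(B) such that every x ∈ E' is infinitely backward recurrent in B, i.e., for every n ∈ ℕ there exists j ≥ n with (R^j)†(x) ∩ B ≠ ∅. -/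
open MeasureTheory Set
open scoped ENNReal NNReal

section Aux

variable {X : Type*}

lemma relIter_one (R : Set (X × X)) : relIter R 1 = R := by
  ext p
  constructor
  · rintro ⟨y, h1, (h2 : y = p.2)⟩
    rwa [h2] at h1
  · intro h
    exact ⟨p.2, h, rfl⟩

lemma relIter_add (R : Set (X × X)) (m k : ℕ) :
    relIter R (m + k) = {p | ∃ y, (p.1, y) ∈ relIter R m ∧ (y, p.2) ∈ relIter R k} := by
  induction m with
  | zero =>
      rw [Nat.zero_add]
      ext p
      constructor
      · intro h; exact ⟨p.1, rfl, h⟩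
      · rintro ⟨y, (h1 : p.1 = y), h2⟩
        rw [← h1] at h2
        exact h2
  | succ m ih =>
      have hnum : m + 1 + k = (m + k) + 1 := by omega
      rw [hnum]
      ext p
      constructor
      · rintro ⟨y, hy, hz⟩
        rw [ih] at hz
        obtain ⟨z, hz1, hz2⟩ := hz
        exact ⟨z, ⟨y, hy, hz1⟩, hz2⟩
      · rintro ⟨z, ⟨y, hy, hz1⟩, hz2⟩
        refine ⟨y, hy, ?_⟩
        rw [ih]
        exact ⟨z, hz1, hz2⟩

lemma relImg_mono (R : Set (X × X)) {A B : Set X} (h : A ⊆ B) :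
    relImg R A ⊆ relImg R B := by
  rintro y ⟨x, hx, hxy⟩
  exact ⟨x, h hx, hxy⟩

lemma relImg_zero (R : Set (X × X)) (A : Set X) : relImg (relIter R 0) A = A := by
  ext y
  constructor
  · rintro ⟨x, hx, (h : x = y)⟩; rwa [h] at hx
  · intro hy; exact ⟨y, hy, rfl⟩

lemma relImg_add (R : Set (X × X)) (m k : ℕ) (A : Set X) :
    relImg (relIter R (m + k)) A = relImg (relIter R k) (relImg (relIter R m) A) := by
  ext z
  constructor
  · rintro ⟨x, hx, hxz⟩
    rw [relIter_add] at hxz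
    obtain ⟨y, h1, h2⟩ := hxz
    exact ⟨y, ⟨x, hx, h1⟩, h2⟩
  · rintro ⟨y, ⟨x, hx, h1⟩, h2⟩
    refine ⟨x, hx, ?_⟩
    rw [relIter_add]
    exact ⟨y, h1, h2⟩

lemma relIter_mul (R : Set (X × X)) (n m : ℕ) :
    relIter (relIter R n) m = relIter R (n * m) := by
  induction m with
  | zero => rw [Nat.mul_zero]; ext p; exact Iff.rfl
  | succ m ih =>
      have hnum : n * (m + 1) = n + n * m := by ring
      rw [hnum, relIter_add R n (n * m)]
      ext p
      constructor
      · rintro ⟨y, h1, h2⟩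
        rw [ih] at h2
        exact ⟨y, h1, h2⟩
      · rintro ⟨y, h1, h2⟩
        refine ⟨y, h1, ?_⟩
        rw [ih]
        exact h2

variable [TopologicalSpace X] [CompactSpace X] [T2Space X]

lemma isClosed_relIter {R : Set (X × X)} (hR : IsClosed R) (n : ℕ) :
    IsClosed (relIter R n) := by
  induction n with
  | zero =>
      have : relIter R 0 = Set.diagonal X := by
        ext p; exact Iff.rfl
      rw [this]
      exact isClosed_diagonal
  | succ n ih =>
      have hcl : IsClosed {q : X × X × X | (q.1, q.2.1) ∈ R ∧ (q.2.1, q.2.2) ∈ relIter R n} := by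
        have h1 : Continuous fun q : X × X × X => (q.1, q.2.1) := by fun_prop
        have h2 : Continuous fun q : X × X × X => (q.2.1, q.2.2) := by fun_prop
        exact (hR.preimage h1).inter (ih.preimage h2)
      have himg : relIter R (n + 1) =
          (fun q : X × X × X => (q.1, q.2.2)) ''
            {q | (q.1, q.2.1) ∈ R ∧ (q.2.1, q.2.2) ∈ relIter R n} := by
        ext p
        constructor
        · rintro ⟨y, h1, h2⟩
          exact ⟨(p.1, y, p.2), ⟨h1, h2⟩, rfl⟩
        · rintro ⟨⟨a, b, c⟩, ⟨h1, h2⟩, h⟩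
          rw [← h]
          exact ⟨b, h1, h2⟩
      rw [himg]
      exact (hcl.isCompact.image (by fun_prop)).isClosed

lemma isCompact_relImg {R' : Set (X × X)} (hR' : IsClosed R') {K : Set X}
    (hK : IsCompact K) : IsCompact (relImg R' K) := by
  have heq : relImg R' K = Prod.snd '' (R' ∩ K ×ˢ (univ : Set X)) := by
    ext y
    constructor
    · rintro ⟨x, hx, hxy⟩
      exact ⟨(x, y), ⟨hxy, hx, trivial⟩, rfl⟩
    · rintro ⟨⟨a, b⟩, ⟨hab, ha, -⟩, h⟩
      rw [← h]
      exact ⟨a, ha, hab⟩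
  rw [heq]
  exact (hR'.isCompact.inter_right (hK.isClosed.prod isClosed_univ)).image continuous_snd

variable [MeasurableSpace X] [BorelSpace X]

lemma mu_le_relImg_iter {R : Set (X × X)} (hR : IsClosed R) (μ : Measure X)
    (hinv : ∀ K : Set X, IsCompact K → μ K ≤ μ (relImg R K)) :
    ∀ (j : ℕ) (K : Set X), IsCompact K → μ K ≤ μ (relImg (relIter R j) K) := by
  intro j
  induction j with
  | zero => intro K _; rw [relImg_zero]
  | succ j ih =>
      intro K hK
      calc μ K ≤ μ (relImg R K) := hinv K hK
        _ ≤ μ (relImg (relIter R j) (relImg R K)) := by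
            have := ih (relImg R K) (isCompact_relImg hR hK)
            exact this
        _ = μ (relImg (relIter R (1 + j)) K) := by
            rw [relImg_add R 1 j K, relIter_one]
        _ = μ (relImg (relIter R (j + 1)) K) := by rw [Nat.add_comm]

/-- Counting argument: if a compact set of positive measure never returns to itself
under any iterate of a measure-expanding closed relation, we contradict finiteness. -/
lemma no_escape (μ : Measure X) [IsProbabilityMeasure μ]
    {S : Set (X × X)} (hS : IsClosed S)
    (hSinv : ∀ K : Set X, IsCompact K → μ K ≤ μ (relImg S K))
    {K' : Set X} (hK' : IsCompact K') (hpos : 0 < μ K') :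
    ∃ m, 1 ≤ m ∧ (K' ∩ relImg (relIter S m) K').Nonempty := by
  by_contra hcon
  push_neg at hcon
  have hdisj : ∀ m, 1 ≤ m → K' ∩ relImg (relIter S m) K' = ∅ := hcon
  set E : ℕ → Set X := fun j => relImg (relIter S j) K' with hE
  have hEcompact : ∀ j, IsCompact (E j) := fun j =>
    isCompact_relImg (isClosed_relIter hS j) hK'
  have hEstep : ∀ j, relImg S (E j) = E (j + 1) := by
    intro j
    show relImg S (relImg (relIter S j) K') = relImg (relIter S (j + 1)) K'
    rw [relImg_add S j 1 K', relIter_one]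
  set W : ℕ → Set X := fun m => ⋃ j ∈ Finset.Icc 1 m, E j with hW
  have hWcompact : ∀ m, IsCompact (W m) :=
    fun m => (Finset.Icc 1 m).isCompact_biUnion (fun j _ => hEcompact j)
  have hWmeas : ∀ m, MeasurableSet (W m) := fun m => (hWcompact m).isClosed.measurableSet
  have hKdisjW : ∀ m, Disjoint K' (W m) := by
    intro m
    rw [Set.disjoint_left]
    intro x hx hxW
    simp only [hW, mem_iUnion, exists_prop] at hxW
    obtain ⟨j, hj, hxj⟩ := hxW
    have h1 : 1 ≤ j := (Finset.mem_Icc.mp hj).1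
    have : x ∈ K' ∩ relImg (relIter S j) K' := ⟨hx, hxj⟩
    rw [hdisj j h1] at this
    exact this
  have hstep : ∀ m, relImg S (K' ∪ W m) = W (m + 1) := by
    intro m
    ext z
    constructor
    · rintro ⟨x, hx | hx, hxz⟩
      · simp only [hW, mem_iUnion, exists_prop]
        refine ⟨1, by simp, ?_⟩
        show z ∈ relImg (relIter S 1) K'
        rw [relIter_one]
        exact ⟨x, hx, hxz⟩
      · simp only [hW, mem_iUnion, exists_prop] at hx ⊢
        obtain ⟨j, hj, hxj⟩ := hx
        rw [Finset.mem_Icc] at hj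
        refine ⟨j + 1, by rw [Finset.mem_Icc]; omega, ?_⟩
        rw [← hEstep j]
        exact ⟨x, hxj, hxz⟩
    · intro hz
      simp only [hW, mem_iUnion, exists_prop] at hz
      obtain ⟨j, hj, hzj⟩ := hz
      rw [Finset.mem_Icc] at hj
      rcases Nat.exists_eq_add_of_le hj.1 with ⟨j', rfl⟩
      rcases Nat.eq_zero_or_pos j' with hj0 | hj0
      · subst hj0
        have hz1 : z ∈ relImg (relIter S 1) K' := hzj
        rw [relIter_one] at hz1
        exact relImg_mono S subset_union_left hz1
      · have hj'' : 1 + j' = (j' - 1 + 1) + 1 := by omega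
        rw [hj''] at hzj
        have : z ∈ relImg S (E (j' - 1 + 1)) := by rw [hEstep]; exact hzj
        refine relImg_mono S (subset_union_right.trans (subset_refl _)) ?_
        obtain ⟨x, hx, hxz⟩ := this
        refine ⟨x, ?_, hxz⟩
        simp only [hW, mem_iUnion, exists_prop]
        exact ⟨j' - 1 + 1, by rw [Finset.mem_Icc]; omega, hx⟩
  have hcount : ∀ m : ℕ, (m : ℝ≥0∞) * μ K' ≤ μ (W m) := by
    intro m
    induction m with
    | zero => simp
    | succ m ih =>
        have h1 : μ (K' ∪ W m) = μ K' + μ (W m) :=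
          measure_union (hKdisjW m) (hWmeas m)
        have h2 : μ (K' ∪ W m) ≤ μ (W (m + 1)) := by
          rw [← hstep m]
          exact hSinv _ (hK'.union (hWcompact m))
        calc ((m + 1 : ℕ) : ℝ≥0∞) * μ K' = μ K' + (m : ℝ≥0∞) * μ K' := by
              push_cast; ring
          _ ≤ μ K' + μ (W m) := by gcongr
          _ = μ (K' ∪ W m) := h1.symm
          _ ≤ μ (W (m + 1)) := h2
  have hle1 : ∀ m : ℕ, (m : ℝ≥0∞) * μ K' ≤ 1 :=
    fun m => (hcount m).trans (prob_le_one)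
  obtain ⟨n, hn⟩ := ENNReal.exists_inv_nat_lt hpos.ne'
  have hn0 : (n : ℝ≥0∞) ≠ 0 := by
    intro h
    rw [h, ENNReal.inv_zero] at hn
    exact (not_lt_of_ge le_top) (hn.trans_le prob_le_one)
  have hntop : (n : ℝ≥0∞) ≠ ⊤ := ENNReal.natCast_ne_top n
  have h1lt : 1 < (n : ℝ≥0∞) * μ K' := by
    calc (1 : ℝ≥0∞) = (n : ℝ≥0∞) * (n : ℝ≥0∞)⁻¹ := (ENNReal.mul_inv_cancel hn0 hntop).symm
      _ < (n : ℝ≥0∞) * μ K' := by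
          exact (ENNReal.mul_lt_mul_iff_right hn0 hntop).mpr hn
  exact absurd (hle1 n) (not_le.mpr h1lt)

/-- Almost every point of a compact set `K` is infinitely backward recurrent into `K`. -/
lemma compact_recurrence [TopologicalSpace.PseudoMetrizableSpace X]
    {R : Set (X × X)} (hR : IsClosed R)
    (μ : Measure X) [IsProbabilityMeasure μ]
    (hinv : ∀ K : Set X, IsCompact K → μ K ≤ μ (relImg R K))
    {K : Set X} (hK : IsCompact K) :
    ∃ E : Set X, MeasurableSet E ∧ E ⊆ K ∧ μ E = μ K ∧
      ∀ x ∈ E, ∀ n : ℕ, ∃ j ≥ n, x ∈ relImg (relIter R j) K := by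
  classical
  set G : ℕ → Set X := fun n => ⋃ j : ℕ, relImg (relIter R (n + 1 + j)) K with hG
  have hGmeas : ∀ n, MeasurableSet (G n) := by
    intro n
    exact MeasurableSet.iUnion fun j =>
      (isCompact_relImg (isClosed_relIter hR (n + 1 + j)) hK).isClosed.measurableSet
  set E : Set X := K ∩ ⋂ n : ℕ, G n with hEdef
  have hEmeas : MeasurableSet E :=
    hK.isClosed.measurableSet.inter (MeasurableSet.iInter hGmeas)
  have hEK : E ⊆ K := inter_subset_left
  -- each bad set has measure zero
  have hFnull : ∀ n : ℕ, μ (K \ G n) = 0 := by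
    intro n
    by_contra hne
    have hFmeas : MeasurableSet (K \ G n) :=
      hK.isClosed.measurableSet.diff (hGmeas n)
    have hpos : 0 < μ (K \ G n) := pos_iff_ne_zero.mpr hne
    obtain ⟨K', hK'sub, hK'comp, hK'pos⟩ := hFmeas.exists_lt_isCompact hpos
    -- apply no_escape with S = relIter R (n+1)
    have hSclosed : IsClosed (relIter R (n + 1)) := isClosed_relIter hR (n + 1)
    have hSinv : ∀ K₀ : Set X, IsCompact K₀ →
        μ K₀ ≤ μ (relImg (relIter R (n + 1)) K₀) :=
      fun K₀ h₀ => mu_le_relImg_iter hR μ hinv (n + 1) K₀ h₀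
    obtain ⟨m, hm1, x, hxK', hximg⟩ := no_escape μ hSclosed hSinv hK'comp hK'pos
    rw [relIter_mul] at hximg
    have hxK : x ∈ relImg (relIter R ((n + 1) * m)) K :=
      relImg_mono _ (hK'sub.trans diff_subset) hximg
    have hxF : x ∈ K \ G n := hK'sub hxK'
    apply hxF.2
    simp only [hG, mem_iUnion]
    refine ⟨(n + 1) * m - (n + 1), ?_⟩
    have : n + 1 + ((n + 1) * m - (n + 1)) = (n + 1) * m := by
      have : n + 1 ≤ (n + 1) * m := Nat.le_mul_of_pos_right _ hm1
      omega
    rw [this]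
    exact hxK
  have hnull : μ (K \ E) = 0 := by
    have hsub : K \ E ⊆ ⋃ n : ℕ, (K \ G n) := by
      intro x hx
      rcases hx with ⟨hxK, hxE⟩
      rw [hEdef] at hxE
      have : x ∉ ⋂ n : ℕ, G n := fun h => hxE ⟨hxK, h⟩
      rw [mem_iInter] at this
      push_neg at this
      obtain ⟨n, hn⟩ := this
      exact mem_iUnion.mpr ⟨n, hxK, hn⟩
    exact measure_mono_null hsub (measure_iUnion_null hFnull)
  have hEeq : μ E = μ K := by
    apply le_antisymm (measure_mono hEK)
    calc μ K = μ (E ∪ (K \ E)) := by rw [union_diff_cancel hEK]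
      _ ≤ μ E + μ (K \ E) := measure_union_le _ _
      _ = μ E := by rw [hnull, add_zero]
  refine ⟨E, hEmeas, hEK, hEeq, ?_⟩
  intro x hx n
  have hxG : x ∈ G n := by
    have := hx.2
    rw [mem_iInter] at this
    exact this n
  simp only [hG, mem_iUnion] at hxG
  obtain ⟨j, hj⟩ := hxG
  exact ⟨n + 1 + j, by omega, hj⟩

end Aux

/-- **Backward Poincaré recurrence for closed relations** (relation-theoretic content of
the Corollary in Section 6 of the paper). -/
theorem poincare_backward_recurrence_closed_relation
    {X : Type*} [TopologicalSpace X] [CompactSpace X] [TopologicalSpace.MetrizableSpace X]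
    [MeasurableSpace X] [BorelSpace X]
    (R : Set (X × X)) (hR : IsClosed R)
    (μ : Measure X) [IsProbabilityMeasure μ]
    (hinv : ∀ K : Set X, IsCompact K → μ K ≤ μ (relImg R K))
    (B : Set X) (hB : MeasurableSet B) (hBpos : 0 < μ B) :
    ∃ E' : Set X, MeasurableSet E' ∧ E' ⊆ B ∧ μ E' = μ B ∧
      ∀ x ∈ E', ∀ n : ℕ, ∃ j ≥ n, (relDag (relIter R j) {x} ∩ B).Nonempty := by
  classical
  -- choose compact approximations of B from inside
  have hKex : ∀ i : ℕ, ∃ K : Set X, K ⊆ B ∧ IsCompact K ∧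
      μ B - (1 : ℝ≥0∞) / (i + 1) < μ K := by
    intro i
    have hlt : μ B - (1 : ℝ≥0∞) / (i + 1) < μ B := by
      apply ENNReal.sub_lt_self (measure_ne_top μ B) hBpos.ne'
      simp [ENNReal.div_eq_top]
    exact hB.exists_lt_isCompact hlt
  choose K hKB hKcomp hKlt using hKex
  have hEx : ∀ i : ℕ, ∃ E : Set X, MeasurableSet E ∧ E ⊆ K i ∧ μ E = μ (K i) ∧
      ∀ x ∈ E, ∀ n : ℕ, ∃ j ≥ n, x ∈ relImg (relIter R j) (K i) :=
    fun i => compact_recurrence hR μ hinv (hKcomp i)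
  choose E hEmeas hEK hEmu hErec using hEx
  refine ⟨⋃ i : ℕ, E i, MeasurableSet.iUnion hEmeas, ?_, ?_, ?_⟩
  · exact iUnion_subset fun i => (hEK i).trans (hKB i)
  · apply le_antisymm
    · exact measure_mono (iUnion_subset fun i => (hEK i).trans (hKB i))
    · -- μ B ≤ μ (⋃ E i)
      apply ENNReal.le_of_forall_pos_le_add
      intro ε hε _
      obtain ⟨n, hn⟩ := ENNReal.exists_inv_nat_lt
        (show (ε : ℝ≥0∞) ≠ 0 by exact_mod_cast hε.ne')
      have h1 : μ B ≤ μ (K n) + (1 : ℝ≥0∞) / (n + 1) := by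
        have := (hKlt n).le
        rwa [tsub_le_iff_right] at this
      have h2 : (1 : ℝ≥0∞) / (n + 1) ≤ (n : ℝ≥0∞)⁻¹ := by
        rw [one_div]
        apply ENNReal.inv_le_inv.mpr
        exact_mod_cast Nat.le_succ n
      calc μ B ≤ μ (K n) + (1 : ℝ≥0∞) / (n + 1) := h1
        _ = μ (E n) + (1 : ℝ≥0∞) / (n + 1) := by rw [hEmu n]
        _ ≤ μ (⋃ i : ℕ, E i) + (n : ℝ≥0∞)⁻¹ :=
            add_le_add (measure_mono (subset_iUnion E n)) h2
        _ ≤ μ (⋃ i : ℕ, E i) + ε := add_le_add_right hn.le _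
  · intro x hx n
    obtain ⟨i, hxi⟩ := mem_iUnion.mp hx
    obtain ⟨j, hj, y, hyK, hyx⟩ := hErec i x hxi n
    refine ⟨j, hj, y, ?_, hKB i hyK⟩
    exact ⟨x, rfl, hyx⟩
end
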